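/- Let A_1,...,A_n ∈ R^m, C = conv{A_1,...,A_n}, and b ∉ C with d = min_{x∈C} ‖b-x‖ and D = max_j ‖b-A_j‖. Let T: R^m -> R^k be linear and ε < d²/D². Suppose that for all u, v in the set {0, b-A_1, ..., b-A_n}: (1-ε)‖u-v‖² ≤ ‖T(u-v)‖² ≤ (1+ε)‖u-v‖² and (1-ε)‖u+v‖² ≤ ‖T(u+v)‖² ≤ (1+ε)‖u+v‖². Then Tb ∉ conv{TA_1,...,TA_n}. -/

import Mathlib

set_option maxHeartbeats 1000000

open scoped RealInnerProductSpace

theorem stmt2 {m n k : ℕ}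
    (A : Fin n → EuclideanSpace ℝ (Fin m)) (b : EuclideanSpace ℝ (Fin m))
    (hb : b ∉ convexHull ℝ (Set.range A))
    (d D ε : ℝ)
    (hd : IsLeast ((fun x => ‖b - x‖) '' (convexHull ℝ (Set.range A))) d)
    (hD : IsGreatest (Set.range (fun j => ‖b - A j‖)) D)
    (T : EuclideanSpace ℝ (Fin m) →ₗ[ℝ] EuclideanSpace ℝ (Fin k))
    (hε : ε < d ^ 2 / D ^ 2)
    (hT : ∀ u ∈ insert (0 : EuclideanSpace ℝ (Fin m)) (Set.range (fun j => b - A j)),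
          ∀ v ∈ insert (0 : EuclideanSpace ℝ (Fin m)) (Set.range (fun j => b - A j)),
          ((1 - ε) * ‖u - v‖ ^ 2 ≤ ‖T (u - v)‖ ^ 2 ∧ ‖T (u - v)‖ ^ 2 ≤ (1 + ε) * ‖u - v‖ ^ 2) ∧
          ((1 - ε) * ‖u + v‖ ^ 2 ≤ ‖T (u + v)‖ ^ 2 ∧ ‖T (u + v)‖ ^ 2 ≤ (1 + ε) * ‖u + v‖ ^ 2)) :
    T b ∉ convexHull ℝ (Set.range (fun j => T (A j))) := by
  classical
  intro hmem
  set u : Fin n → EuclideanSpace ℝ (Fin m) := fun j => b - A j with hu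
  -- d > 0
  obtain ⟨x, hxC, hxd⟩ := hd.1
  have hd0 : 0 < d := by
    have hxd' : ‖b - x‖ = d := hxd
    rcases eq_or_lt_of_le (hxd' ▸ norm_nonneg (b - x)) with h | h
    · exfalso
      have hbx : b - x = 0 := norm_eq_zero.mp (by rw [hxd', ← h])
      exact hb (sub_eq_zero.mp hbx ▸ hxC)
    · exact h
  -- D ≥ d > 0
  obtain ⟨j₀, hj₀⟩ := hD.1
  have hAC : ∀ j, A j ∈ convexHull ℝ (Set.range A) := fun j =>
    subset_convexHull ℝ _ ⟨j, rfl⟩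
  have hdD : d ≤ D := (show ‖b - A j₀‖ = D from hj₀) ▸ hd.2 ⟨A j₀, hAC j₀, rfl⟩
  have hD0 : 0 < D := lt_of_lt_of_le hd0 hdD
  -- dispose of the case ε < 0
  have hε0 : 0 ≤ ε := by
    by_contra hneg
    push_neg at hneg
    have hmemS : u j₀ ∈ insert (0 : EuclideanSpace ℝ (Fin m))
        (Set.range (fun j => b - A j)) := Set.mem_insert_of_mem _ ⟨j₀, rfl⟩
    have h0S : (0 : EuclideanSpace ℝ (Fin m)) ∈ insert (0 : EuclideanSpace ℝ (Fin m))
        (Set.range (fun j => b - A j)) := Set.mem_insert _ _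
    obtain ⟨⟨h1, h2⟩, _⟩ := hT (u j₀) hmemS 0 h0S
    rw [sub_zero] at h1 h2
    have hnn : (0:ℝ) ≤ ‖u j₀‖ ^ 2 := sq_nonneg _
    have hz : ‖u j₀‖ ^ 2 = 0 := by nlinarith
    have : u j₀ = 0 := norm_eq_zero.mp (pow_eq_zero_iff (n := 2) (by norm_num) |>.mp hz)
    exact hb (sub_eq_zero.mp this ▸ hAC j₀)
  have hεD : ε * D ^ 2 < d ^ 2 := (lt_div_iff₀ (by positivity)).mp hε
  -- per-pair inner product bound
  have key : ∀ i j : Fin n,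
      (inner ℝ (u i) (u j) : ℝ) - (inner ℝ (T (u i)) (T (u j)) : ℝ) ≤ ε * D ^ 2 := by
    intro i j
    have hiS : u i ∈ insert (0 : EuclideanSpace ℝ (Fin m))
        (Set.range (fun j => b - A j)) := Set.mem_insert_of_mem _ ⟨i, rfl⟩
    have hjS : u j ∈ insert (0 : EuclideanSpace ℝ (Fin m))
        (Set.range (fun j => b - A j)) := Set.mem_insert_of_mem _ ⟨j, rfl⟩
    obtain ⟨⟨_, h2⟩, ⟨h3, _⟩⟩ := hT (u i) hiS (u j) hjS
    rw [map_sub] at h2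
    rw [map_add] at h3
    have e1 := norm_add_sq_real (u i) (u j)
    have e2 := norm_sub_sq_real (u i) (u j)
    have e3 := norm_add_sq_real (T (u i)) (T (u j))
    have e4 := norm_sub_sq_real (T (u i)) (T (u j))
    have hni : ‖u i‖ ≤ D := hD.2 ⟨i, rfl⟩
    have hnj : ‖u j‖ ≤ D := hD.2 ⟨j, rfl⟩
    have hni2 : ‖u i‖ ^ 2 ≤ D ^ 2 := pow_le_pow_left₀ (norm_nonneg _) hni 2
    have hnj2 : ‖u j‖ ^ 2 ≤ D ^ 2 := pow_le_pow_left₀ (norm_nonneg _) hnj 2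
    have hP : ‖u i + u j‖ ^ 2 + ‖u i - u j‖ ^ 2 ≤ 4 * D ^ 2 := by linarith
    have h4 : ε * (‖u i + u j‖ ^ 2 + ‖u i - u j‖ ^ 2) ≤ ε * (4 * D ^ 2) :=
      mul_le_mul_of_nonneg_left hP hε0
    rw [add_mul, one_mul] at h2
    rw [sub_mul, one_mul] at h3
    rw [mul_add] at h4
    linarith
  -- extract convex weights for T b
  rw [convexHull_range_eq_exists_affineCombination] at hmem
  obtain ⟨s, w, hw0, hw1, hws⟩ := hmem
  rw [Finset.affineCombination_eq_linear_combination _ _ _ hw1] at hws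
  set lam : Fin n → ℝ := fun i => if i ∈ s then w i else 0 with hlam
  have hlam0 : ∀ i, 0 ≤ lam i := by
    intro i; simp only [hlam]; split
    · exact hw0 _ ‹_›
    · exact le_refl 0
  have hlam1 : ∑ i, lam i = 1 := by
    rw [hlam, ← hw1]
    exact Finset.sum_ite_mem _ _ _ |>.trans (by rw [Finset.univ_inter])
  have hlamTb : ∑ i, lam i • T (A i) = T b := by
    rw [← hws]
    simp only [hlam, ite_smul, zero_smul]
    exact Finset.sum_ite_mem _ _ _ |>.trans (by rw [Finset.univ_inter])
  -- the point of C nearest in the combination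
  have hsumC : ∑ i, lam i • A i ∈ convexHull ℝ (Set.range A) :=
    mem_convexHull_of_exists_fintype lam A hlam0 hlam1 (fun i => ⟨i, rfl⟩) rfl
  -- w := ∑ lam i • u i
  have hwrep : ∑ i, lam i • u i = b - ∑ i, lam i • A i := by
    simp only [hu, smul_sub]
    rw [Finset.sum_sub_distrib, ← Finset.sum_smul, hlam1, one_smul]
  have hwd : d ≤ ‖∑ i, lam i • u i‖ := by
    rw [hwrep]
    exact hd.2 ⟨∑ i, lam i • A i, hsumC, rfl⟩
  have hwd2 : d ^ 2 ≤ ‖∑ i, lam i • u i‖ ^ 2 := by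
    have : (0:ℝ) ≤ d := hd0.le
    nlinarith
  -- T applied to w is 0
  have hTw0 : T (∑ i, lam i • u i) = 0 := by
    simp only [hu, map_sum, map_smul, map_sub, smul_sub]
    rw [Finset.sum_sub_distrib, ← Finset.sum_smul, hlam1, one_smul, hlamTb, sub_self]
  -- norms as double sums
  have dsum : ∀ (E : Type) [NormedAddCommGroup E] [InnerProductSpace ℝ E]
      (v : Fin n → E), ‖∑ i, lam i • v i‖ ^ 2 =
        ∑ i, ∑ j, lam i * lam j * (inner ℝ (v i) (v j) : ℝ) := by
    intro E _ _ v
    rw [← real_inner_self_eq_norm_sq]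
    simp only [sum_inner, inner_sum, real_inner_smul_left, real_inner_smul_right]
    exact Finset.sum_congr rfl fun i _ => Finset.sum_congr rfl fun j _ => by
      rw [real_inner_comm (v j) (v i)]; ring
  -- T distributes over the sum
  have hTsum : ∑ i, lam i • T (u i) = T (∑ i, lam i • u i) := by
    rw [map_sum]
    exact Finset.sum_congr rfl fun i _ => (map_smul T _ _).symm
  have hTnorm0 : ‖∑ i, lam i • T (u i)‖ ^ 2 = 0 := by
    rw [hTsum, hTw0, norm_zero]
    norm_num
  -- difference of the two double sums
  have hdiff : ‖∑ i, lam i • u i‖ ^ 2 - ‖∑ i, lam i • T (u i)‖ ^ 2 =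
      ∑ i, ∑ j, lam i * lam j * ((inner ℝ (u i) (u j) : ℝ) - (inner ℝ (T (u i)) (T (u j)) : ℝ)) := by
    rw [dsum (EuclideanSpace ℝ (Fin m)) u, dsum (EuclideanSpace ℝ (Fin k)) (fun i => T (u i)), ← Finset.sum_sub_distrib]
    exact Finset.sum_congr rfl fun i _ => by
      rw [← Finset.sum_sub_distrib]
      exact Finset.sum_congr rfl fun j _ => by ring
  have hbound : ∑ i, ∑ j, lam i * lam j * ((inner ℝ (u i) (u j) : ℝ) - (inner ℝ (T (u i)) (T (u j)) : ℝ)) ≤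
      ∑ i, ∑ j, lam i * lam j * (ε * D ^ 2) := by
    refine Finset.sum_le_sum fun i _ => Finset.sum_le_sum fun j _ => ?_
    exact mul_le_mul_of_nonneg_left (key i j) (mul_nonneg (hlam0 i) (hlam0 j))
  have hconst : ∑ i : Fin n, ∑ j : Fin n, lam i * lam j * (ε * D ^ 2) = ε * D ^ 2 := by
    simp only [mul_assoc, ← Finset.mul_sum, ← Finset.sum_mul, hlam1, one_mul]
  rw [hconst] at hbound
  rw [hTnorm0, sub_zero] at hdiff
  linarith [hdiff ▸ hbound]
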